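/- Let H be a complex Hilbert space, let A, B be positive bounded linear operators on H with B² ≤ A², and let λ > 0. Then B²(λI+B)^{-1} ≤ A²(λI+A)^{-1}. -/

import Mathlib

open scoped NNReal


/-- A real function `f` is *operator monotone on the set `S ⊆ ℝ`* if for all bounded
self-adjoint operators `A ≤ B` (in the Loewner order) on any complex Hilbert space, with
spectra contained in `S`, one has `f(A) ≤ f(B)`, where `f(A)` is given by the continuous
functional calculus. -/
def IsOperatorMonotoneOn (f : ℝ → ℝ) (S : Set ℝ) : Prop :=
  ∀ (K : Type) [NormedAddCommGroup K] [InnerProductSpace ℂ K] [CompleteSpace K],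
    ∀ A B : K →L[ℂ] K, IsSelfAdjoint A → IsSelfAdjoint B →
      spectrum ℝ A ⊆ S → spectrum ℝ B ⊆ S →
      A ≤ B → cfc f A ≤ cfc f B

/-- A real function `f` is *operator convex on `[0,∞)`* if for all bounded self-adjoint
operators `A`, `B` on any complex Hilbert space with spectra in `[0,∞)` and all `t ∈ [0,1]`,
`f(tA + (1-t)B) ≤ t f(A) + (1-t) f(B)` in the sense of the continuous functional calculus. -/
def IsOperatorConvexOnNonneg (f : ℝ → ℝ) : Prop :=
  ∀ (K : Type) [NormedAddCommGroup K] [InnerProductSpace ℂ K] [CompleteSpace K],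
    ∀ A B : K →L[ℂ] K, IsSelfAdjoint A → IsSelfAdjoint B →
      spectrum ℝ A ⊆ Set.Ici (0 : ℝ) → spectrum ℝ B ⊆ Set.Ici (0 : ℝ) →
      ∀ t : ℝ, 0 ≤ t → t ≤ 1 →
        cfc f (t • A + (1 - t) • B) ≤ t • cfc f A + (1 - t) • cfc f B

/-- The right derivative of `f` at `0`, `f′₊(0) = lim_{t→0⁺} (f t - f 0)/t`, exists and is
non-negative. -/
def HasNonnegRightDerivAtZero (f : ℝ → ℝ) : Prop :=
  ∃ d : ℝ, 0 ≤ d ∧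
    Filter.Tendsto (fun t => (f t - f 0) / t) (nhdsWithin 0 (Set.Ioi 0)) (nhds d)

/-- The open interval `(a,b) ⊆ ℝ` determined by extended reals `a < b`. -/
def erealIoo (a b : EReal) : Set ℝ := {x : ℝ | a < (x : ℝ) ∧ (x : ℝ) < b}

section Auxiliary


variable {𝒜 : Type*} [CStarAlgebra 𝒜] [PartialOrder 𝒜] [StarOrderedRing 𝒜]

lemma my_le_of_forall_le_add {a b : 𝒜} (h : ∀ δ : ℝ, 0 < δ → a ≤ b + algebraMap ℝ 𝒜 δ) :
    a ≤ b := by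
  rw [← sub_nonneg]
  have key : ∀ n : ℕ, b - a + algebraMap ℝ 𝒜 (1 / (n + 1)) ∈ {x : 𝒜 | 0 ≤ x} := by
    intro n
    have := h (1 / (n + 1)) (by positivity)
    simp only [Set.mem_setOf_eq]
    rw [← sub_nonneg] at this
    convert this using 1
    abel
  have htend : Filter.Tendsto (fun n : ℕ => b - a + algebraMap ℝ 𝒜 (1 / (n + 1)))
      Filter.atTop (nhds (b - a)) := by
    have h1 : Filter.Tendsto (fun n : ℕ => (1 : ℝ) / (n + 1)) Filter.atTop (nhds 0) :=
      tendsto_one_div_add_atTop_nhds_zero_nat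
    have h2 : Continuous fun t : ℝ => b - a + algebraMap ℝ 𝒜 t := by
      have : Continuous (algebraMap ℝ 𝒜) := continuous_algebraMap ℝ 𝒜
      continuity
    simpa [Function.comp_def] using (h2.tendsto 0).comp h1
  exact (CStarAlgebra.isClosed_nonneg (A := 𝒜)).mem_of_tendsto htend
    (Filter.Eventually.of_forall key)

lemma my_sqrt_eq_real {a : 𝒜} (ha : 0 ≤ a) : CFC.sqrt a = cfc Real.sqrt a := by
  rw [CFC.sqrt_eq_cfc, cfc_nnreal_eq_real _ _ ha]
  exact cfc_congr fun x hx => by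
    rw [Real.coe_sqrt, Real.coe_toNNReal _ (spectrum_nonneg_of_nonneg ha hx)]

lemma my_spectrum_pos {a : 𝒜ˣ} (ha : 0 ≤ (a : 𝒜)) : ∀ x ∈ spectrum ℝ (a : 𝒜), 0 < x := by
  intro x hx
  have h0 : x ≠ 0 := by
    rintro rfl
    exact spectrum.zero_notMem ℝ a.isUnit hx
  exact lt_of_le_of_ne (spectrum_nonneg_of_nonneg ha hx) (Ne.symm h0)

lemma my_sqrt_mono_unit {a : 𝒜} {b : 𝒜ˣ} (ha : 0 ≤ a) (hb : 0 ≤ (b : 𝒜))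
    (hab : a ≤ (b : 𝒜)) : CFC.sqrt a ≤ CFC.sqrt (b : 𝒜) := by
  nontriviality 𝒜
  have h1 : ‖CFC.sqrt a * CFC.sqrt (↑b⁻¹ : 𝒜)‖ ≤ 1 :=
    (le_iff_norm_sqrt_mul_sqrt_inv ha hb).mp hab
  have hbspec := my_spectrum_pos hb
  have hsqne : ∀ x ∈ spectrum ℝ (b : 𝒜), Real.sqrt x ≠ 0 :=
    fun x hx => ne_of_gt (Real.sqrt_pos.mpr (hbspec x hx))
  have hbsa : IsSelfAdjoint (b : 𝒜) := .of_nonneg hb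
  let sb : 𝒜ˣ := cfcUnits Real.sqrt (b : 𝒜) hsqne
  have hsbval : (sb : 𝒜) = CFC.sqrt (b : 𝒜) := (my_sqrt_eq_real hb).symm
  have hsbinv : (↑sb⁻¹ : 𝒜) = cfc (fun x : ℝ => (Real.sqrt x)⁻¹) (b : 𝒜) := rfl
  have hsb0 : 0 ≤ (sb : 𝒜) := by
    rw [hsbval]; exact CFC.sqrt_nonneg _
  have hinvb : 0 ≤ (↑b⁻¹ : 𝒜) := CFC.inv_nonneg_of_nonneg b hb
  have hsqrtinv : CFC.sqrt (↑b⁻¹ : 𝒜) = (↑sb⁻¹ : 𝒜) := by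
    rw [my_sqrt_eq_real hinvb, hsbinv, ← cfc_inv_id (R := ℝ) b,
      ← cfc_comp' Real.sqrt (fun x : ℝ => x⁻¹) (b : 𝒜)
        (Real.continuous_sqrt.continuousOn)
        (ContinuousOn.inv₀ continuousOn_id fun x hx => ne_of_gt (hbspec x hx))]
    exact cfc_congr fun x hx => (Real.sqrt_inv x)
  rw [← hsbval, le_iff_norm_sqrt_mul_sqrt_inv (CFC.sqrt_nonneg _) hsb0]
  set X := CFC.sqrt (CFC.sqrt a) * CFC.sqrt (↑sb⁻¹ : 𝒜) with hX
  have hXsq : ‖X‖ * ‖X‖ ≤ 1 := by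
    rw [← CStarRing.norm_star_mul_self]
    have hstar : star X = CFC.sqrt (↑sb⁻¹ : 𝒜) * CFC.sqrt (CFC.sqrt a) := by
      rw [hX, star_mul, (IsSelfAdjoint.of_nonneg (CFC.sqrt_nonneg _)).star_eq,
        (IsSelfAdjoint.of_nonneg (CFC.sqrt_nonneg _)).star_eq]
    set y := CFC.sqrt (↑sb⁻¹ : 𝒜) with hy'
    set z := CFC.sqrt a with hz'
    have hyz : star X * X = y * z * y := by
      rw [hstar, hX, mul_assoc, ← mul_assoc (CFC.sqrt z) (CFC.sqrt z) y,
        CFC.sqrt_mul_sqrt_self z (CFC.sqrt_nonneg _), ← mul_assoc]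
    rw [hyz]
    have hy : IsSelfAdjoint y := .of_nonneg (CFC.sqrt_nonneg _)
    have hpos : 0 ≤ y * z * y := by
      have := star_left_conjugate_nonneg (CFC.sqrt_nonneg _ : 0 ≤ z) y
      rwa [hy.star_eq] at this
    set r := ‖y * z * y‖ with hr'
    have hrspec : r ∈ spectrum ℝ (y * z * y) := CStarAlgebra.norm_mem_spectrum_of_nonneg hpos
    rcases eq_or_ne r 0 with hr0 | hrne
    · rw [hr0]; norm_num
    · have hmem : r ∈ spectrum ℝ (z * (y * y)) := by
        have e1 : r ∈ spectrum ℝ (y * z * y) \ {0} := ⟨hrspec, hrne⟩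
        rw [spectrum.nonzero_mul_comm, ← mul_assoc,
          spectrum.nonzero_mul_comm] at e1
        exact e1.1
      have hyy : y * y = (↑sb⁻¹ : 𝒜) := CFC.sqrt_mul_sqrt_self _ (CFC.inv_nonneg_of_nonneg sb hsb0)
      rw [hyy] at hmem
      have h2 := spectrum.norm_le_norm_of_mem hmem
      rw [Real.norm_of_nonneg (norm_nonneg _)] at h2
      refine h2.trans ?_
      rw [← hsqrtinv]; exact h1
  nlinarith [norm_nonneg X]

lemma my_algebraMap_nonneg {δ : ℝ} (hδ : 0 ≤ δ) : (0 : 𝒜) ≤ algebraMap ℝ 𝒜 δ := by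
  rw [← cfc_const δ (1 : 𝒜) (IsSelfAdjoint.one 𝒜)]
  exact cfc_nonneg (fun x _ => hδ)

lemma my_algebraMap_isUnit {δ : ℝ} (hδ : 0 < δ) : IsUnit (algebraMap ℝ 𝒜 δ) :=
  (isUnit_iff_ne_zero.mpr hδ.ne').map (algebraMap ℝ 𝒜)

lemma my_unit_shift {b : 𝒜} (hb : 0 ≤ b) {δ : ℝ} (hδ : 0 < δ) :
    IsUnit (b + algebraMap ℝ 𝒜 δ) ∧ 0 ≤ b + algebraMap ℝ 𝒜 δ :=
  ⟨CStarAlgebra.isUnit_of_le _ (le_add_of_nonneg_left hb)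
    ⟨my_algebraMap_nonneg hδ.le, my_algebraMap_isUnit hδ⟩, add_nonneg hb (my_algebraMap_nonneg hδ.le)⟩

lemma my_sqrt_mono {a b : 𝒜} (ha : 0 ≤ a) (hab : a ≤ b) :
    cfc Real.sqrt a ≤ cfc Real.sqrt b := by
  have hb : 0 ≤ b := ha.trans hab
  have hbsa : IsSelfAdjoint b := .of_nonneg hb
  rw [← my_sqrt_eq_real ha, ← my_sqrt_eq_real hb]
  refine my_le_of_forall_le_add fun ε hε => ?_
  have hδ : 0 < ε ^ 2 := by positivity
  obtain ⟨hu, hpos⟩ := my_unit_shift hb hδ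
  have step1 : CFC.sqrt a ≤ CFC.sqrt (b + algebraMap ℝ 𝒜 (ε ^ 2)) := by
    have h := my_sqrt_mono_unit (b := hu.unit) ha
      (by rw [IsUnit.unit_spec]; exact hpos)
      (by rw [IsUnit.unit_spec]
          exact hab.trans (le_add_of_nonneg_right (my_algebraMap_nonneg hδ.le)))
    rwa [IsUnit.unit_spec] at h
  refine step1.trans ?_
  rw [my_sqrt_eq_real hpos, my_sqrt_eq_real hb]
  have e1 : b + algebraMap ℝ 𝒜 (ε ^ 2) = cfc (fun x : ℝ => x + ε ^ 2) b := by
    have := cfc_add_const (R := ℝ) (ε ^ 2) id b (by fun_prop) hbsa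
    rw [cfc_id ℝ b hbsa] at this
    exact this.symm
  rw [e1, ← cfc_comp' Real.sqrt (fun x : ℝ => x + ε ^ 2) b
    Real.continuous_sqrt.continuousOn (by fun_prop) hbsa]
  have e2 : cfc Real.sqrt b + algebraMap ℝ 𝒜 ε
      = cfc (fun x : ℝ => Real.sqrt x + ε) b :=
    (cfc_add_const (R := ℝ) ε Real.sqrt b Real.continuous_sqrt.continuousOn hbsa).symm
  rw [e2]
  refine cfc_mono (fun x hx => ?_) (by fun_prop) (by fun_prop)
  have hx0 : 0 ≤ x := spectrum_nonneg_of_nonneg hb hx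
  have h1 : Real.sqrt (x + ε ^ 2) ≤ Real.sqrt ((Real.sqrt x + ε) ^ 2) := by
    refine Real.sqrt_le_sqrt ?_
    nlinarith [Real.sqrt_nonneg x, Real.sq_sqrt hx0]
  rwa [Real.sqrt_sq (by positivity)] at h1

lemma my_scalar_eq {l x : ℝ} (hl : 0 < l) (hx : 0 < x) :
    (l * x⁻¹ + (Real.sqrt x)⁻¹)⁻¹ = x / (l + Real.sqrt x) := by
  have hsx : Real.sqrt x * Real.sqrt x = x := Real.mul_self_sqrt hx.le
  have hsp : 0 < Real.sqrt x := Real.sqrt_pos.mpr hx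
  have e : l * x⁻¹ + (Real.sqrt x)⁻¹ = (l + Real.sqrt x) / x := by
    field_simp
    nlinarith [hsx]
  rw [e, inv_div]

lemma my_main_unit {l : ℝ} (hl : 0 < l) {a b : 𝒜} (ha : 0 ≤ a) (hab : a ≤ b)
    (hua : IsUnit a) :
    cfc (fun s : ℝ => s / (l + Real.sqrt s)) a ≤
      cfc (fun s : ℝ => s / (l + Real.sqrt s)) b := by
  have hb : 0 ≤ b := ha.trans hab
  have hub : IsUnit b := CStarAlgebra.isUnit_of_le a hab ⟨ha, hua⟩
  lift a to 𝒜ˣ using hua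
  lift b to 𝒜ˣ using hub
  have spa := my_spectrum_pos ha
  have spb := my_spectrum_pos hb
  set h : ℝ → ℝ := fun s => l * s⁻¹ + (Real.sqrt s)⁻¹ with hh
  have hconta : ContinuousOn h (spectrum ℝ (a : 𝒜)) :=
    (continuousOn_const.mul (ContinuousOn.inv₀ continuousOn_id
      fun x hx => (spa x hx).ne')).add
      ((Real.continuous_sqrt.continuousOn).inv₀
        fun x hx => (Real.sqrt_pos.mpr (spa x hx)).ne')
  have hcontb : ContinuousOn h (spectrum ℝ (b : 𝒜)) :=
    (continuousOn_const.mul (ContinuousOn.inv₀ continuousOn_id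
      fun x hx => (spb x hx).ne')).add
      ((Real.continuous_sqrt.continuousOn).inv₀
        fun x hx => (Real.sqrt_pos.mpr (spb x hx)).ne')
  have hcontia : ContinuousOn (fun s : ℝ => s⁻¹) (spectrum ℝ (a : 𝒜)) :=
    ContinuousOn.inv₀ continuousOn_id fun x hx => (spa x hx).ne'
  have hcontib : ContinuousOn (fun s : ℝ => s⁻¹) (spectrum ℝ (b : 𝒜)) :=
    ContinuousOn.inv₀ continuousOn_id fun x hx => (spb x hx).ne'
  have hcontsa : ContinuousOn (fun s : ℝ => (Real.sqrt s)⁻¹) (spectrum ℝ (a : 𝒜)) :=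
    (Real.continuous_sqrt.continuousOn).inv₀
      fun x hx => (Real.sqrt_pos.mpr (spa x hx)).ne'
  have hcontsb : ContinuousOn (fun s : ℝ => (Real.sqrt s)⁻¹) (spectrum ℝ (b : 𝒜)) :=
    (Real.continuous_sqrt.continuousOn).inv₀
      fun x hx => (Real.sqrt_pos.mpr (spb x hx)).ne'
  have hasa : IsSelfAdjoint (a : 𝒜) := .of_nonneg ha
  have hbsa : IsSelfAdjoint (b : 𝒜) := .of_nonneg hb
  have hdecomp : ∀ (c : 𝒜) (hc : IsSelfAdjoint c)
      (h1 : ContinuousOn (fun s : ℝ => s⁻¹) (spectrum ℝ c))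
      (h2 : ContinuousOn (fun s : ℝ => (Real.sqrt s)⁻¹) (spectrum ℝ c)),
      cfc h c = l • cfc (fun s : ℝ => s⁻¹) c + cfc (fun s : ℝ => (Real.sqrt s)⁻¹) c := by
    intro c hc h1 h2
    rw [hh, cfc_add c _ _ (continuousOn_const.fun_mul h1) h2, ← cfc_smul l _ c h1]
    norm_num
  have hsqnea : ∀ x ∈ spectrum ℝ (a : 𝒜), Real.sqrt x ≠ 0 :=
    fun x hx => (Real.sqrt_pos.mpr (spa x hx)).ne'
  have hsqneb : ∀ x ∈ spectrum ℝ (b : 𝒜), Real.sqrt x ≠ 0 :=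
    fun x hx => (Real.sqrt_pos.mpr (spb x hx)).ne'
  let sa : 𝒜ˣ := cfcUnits Real.sqrt (a : 𝒜) hsqnea Real.continuous_sqrt.continuousOn hasa
  let sb : 𝒜ˣ := cfcUnits Real.sqrt (b : 𝒜) hsqneb Real.continuous_sqrt.continuousOn hbsa
  have hsa0 : 0 ≤ (sa : 𝒜) := cfc_nonneg fun x _ => Real.sqrt_nonneg x
  have hsmono : (sa : 𝒜) ≤ (sb : 𝒜) := my_sqrt_mono ha hab
  have hsinv : (↑sb⁻¹ : 𝒜) ≤ (↑sa⁻¹ : 𝒜) := CStarAlgebra.inv_le_inv hsa0 hsmono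
  have hinv : (↑b⁻¹ : 𝒜) ≤ (↑a⁻¹ : 𝒜) := CStarAlgebra.inv_le_inv ha hab
  have hmono : cfc h (b : 𝒜) ≤ cfc h (a : 𝒜) := by
    rw [hdecomp (a : 𝒜) hasa hcontia hcontsa, hdecomp (b : 𝒜) hbsa hcontib hcontsb]
    have e1 : cfc (fun s : ℝ => s⁻¹) (a : 𝒜) = (↑a⁻¹ : 𝒜) := cfc_inv_id a hasa
    have e2 : cfc (fun s : ℝ => s⁻¹) (b : 𝒜) = (↑b⁻¹ : 𝒜) := cfc_inv_id b hbsa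
    have e3 : cfc (fun s : ℝ => (Real.sqrt s)⁻¹) (a : 𝒜) = (↑sa⁻¹ : 𝒜) := rfl
    have e4 : cfc (fun s : ℝ => (Real.sqrt s)⁻¹) (b : 𝒜) = (↑sb⁻¹ : 𝒜) := rfl
    rw [e1, e2, e3, e4]
    exact add_le_add (smul_le_smul_of_nonneg_left hinv hl.le) hsinv
  have hposb : 0 ≤ cfc h (b : 𝒜) := by
    refine cfc_nonneg fun x hx => ?_
    have hx1 := spb x hx
    have h1 : 0 < Real.sqrt x := Real.sqrt_pos.mpr hx1
    positivity
  have hhnea : ∀ x ∈ spectrum ℝ (a : 𝒜), h x ≠ 0 := by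
    intro x hx
    have hx1 := spa x hx
    have h1 : 0 < Real.sqrt x := Real.sqrt_pos.mpr hx1
    positivity
  have hhneb : ∀ x ∈ spectrum ℝ (b : 𝒜), h x ≠ 0 := by
    intro x hx
    have hx1 := spb x hx
    have h1 : 0 < Real.sqrt x := Real.sqrt_pos.mpr hx1
    positivity
  let ua : 𝒜ˣ := cfcUnits h (a : 𝒜) hhnea hconta hasa
  let ub : 𝒜ˣ := cfcUnits h (b : 𝒜) hhneb hcontb hbsa
  have key : (↑ua⁻¹ : 𝒜) ≤ (↑ub⁻¹ : 𝒜) :=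
    CStarAlgebra.inv_le_inv (a := ub) (b := ua) hposb hmono
  have f1 : (↑ua⁻¹ : 𝒜) = cfc (fun s : ℝ => (h s)⁻¹) (a : 𝒜) := rfl
  have f2 : (↑ub⁻¹ : 𝒜) = cfc (fun s : ℝ => (h s)⁻¹) (b : 𝒜) := rfl
  rw [f1, f2] at key
  have g1 : cfc (fun s : ℝ => (h s)⁻¹) (a : 𝒜)
      = cfc (fun s : ℝ => s / (l + Real.sqrt s)) (a : 𝒜) :=
    cfc_congr fun x hx => my_scalar_eq hl (spa x hx)
  have g2 : cfc (fun s : ℝ => (h s)⁻¹) (b : 𝒜)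
      = cfc (fun s : ℝ => s / (l + Real.sqrt s)) (b : 𝒜) :=
    cfc_congr fun x hx => my_scalar_eq hl (spb x hx)
  rwa [g1, g2] at key

lemma my_g_mono {l : ℝ} (hl : 0 < l) {x y : ℝ} (hx : 0 ≤ x) (hxy : x ≤ y) :
    x / (l + Real.sqrt x) ≤ y / (l + Real.sqrt y) := by
  have hy : 0 ≤ y := hx.trans hxy
  have h1 : Real.sqrt x ≤ Real.sqrt y := Real.sqrt_le_sqrt hxy
  have hsx := Real.sqrt_nonneg x
  have hsy := Real.sqrt_nonneg y
  have hx' : Real.sqrt x * Real.sqrt x = x := Real.mul_self_sqrt hx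
  have hy' : Real.sqrt y * Real.sqrt y = y := Real.mul_self_sqrt hy
  rw [div_le_div_iff₀ (by positivity) (by positivity)]
  nlinarith [mul_nonneg (mul_nonneg hsx hsy) (sub_nonneg.2 h1), mul_nonneg hsx hsy]

lemma my_g_shift {l ε : ℝ} (hl : 0 < l) (hε : 0 < ε) {x : ℝ} (hx : 0 ≤ x) :
    (x + ε) / (l + Real.sqrt (x + ε)) ≤ x / (l + Real.sqrt x) + ε / l := by
  set u := Real.sqrt x with hu
  set v := Real.sqrt (x + ε) with hv
  have hu0 : 0 ≤ u := Real.sqrt_nonneg x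
  have hv0 : 0 ≤ v := Real.sqrt_nonneg (x + ε)
  have huv : u ≤ v := Real.sqrt_le_sqrt (by linarith)
  have hu2 : u * u = x := Real.mul_self_sqrt hx
  have hv2 : v * v = x + ε := Real.mul_self_sqrt (by linarith)
  rw [div_add_div _ _ (by positivity) hl.ne', div_le_div_iff₀ (by positivity) (by positivity)]
  have hεeq : ε = v * v - u * u := by linarith
  have expand : (x * l + (l + u) * ε) * (l + v) - (x + ε) * ((l + u) * l)
      = (v - u) * (l * ((u + v) ^ 2 - u * v) + u * v * (u + v)) := by
    rw [← hu2, hεeq]; ring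
  have inner0 : 0 ≤ l * ((u + v) ^ 2 - u * v) + u * v * (u + v) := by
    have h1 : 0 ≤ (u + v) ^ 2 - u * v := by nlinarith [mul_nonneg hu0 hv0, sq_nonneg (u + v)]
    have h2 : 0 ≤ u * v * (u + v) := mul_nonneg (mul_nonneg hu0 hv0) (add_nonneg hu0 hv0)
    nlinarith
  nlinarith [mul_nonneg (sub_nonneg.2 huv) inner0]

lemma my_main {l : ℝ} (hl : 0 < l) {a b : 𝒜} (ha : 0 ≤ a) (hab : a ≤ b) :
    cfc (fun s : ℝ => s / (l + Real.sqrt s)) a ≤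
      cfc (fun s : ℝ => s / (l + Real.sqrt s)) b := by
  have hb : 0 ≤ b := ha.trans hab
  have hasa : IsSelfAdjoint a := .of_nonneg ha
  have hbsa : IsSelfAdjoint b := .of_nonneg hb
  have hgc : Continuous (fun s : ℝ => s / (l + Real.sqrt s)) :=
    continuous_id.div (continuous_const.add Real.continuous_sqrt)
      (fun x => by positivity)
  refine my_le_of_forall_le_add fun δ hδ => ?_
  set ε := δ * l with hεdef
  have hε0 : 0 < ε := by positivity
  obtain ⟨hua, hpa⟩ := my_unit_shift ha hε0
  obtain ⟨hub, hpb⟩ := my_unit_shift hb hε0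
  have hmid : cfc (fun s : ℝ => s / (l + Real.sqrt s)) (a + algebraMap ℝ 𝒜 ε)
      ≤ cfc (fun s : ℝ => s / (l + Real.sqrt s)) (b + algebraMap ℝ 𝒜 ε) :=
    my_main_unit hl hpa (add_le_add_left hab _) hua
  have shift : ∀ (c : 𝒜) (hc : IsSelfAdjoint c),
      cfc (fun s : ℝ => s / (l + Real.sqrt s)) (c + algebraMap ℝ 𝒜 ε)
        = cfc (fun x : ℝ => (x + ε) / (l + Real.sqrt (x + ε))) c := by
    intro c hc
    have e1 : c + algebraMap ℝ 𝒜 ε = cfc (fun x : ℝ => x + ε) c := by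
      have := cfc_add_const (R := ℝ) ε id c (by fun_prop) hc
      rw [cfc_id ℝ c hc] at this
      exact this.symm
    rw [e1, ← cfc_comp' (fun s : ℝ => s / (l + Real.sqrt s)) (fun x : ℝ => x + ε) c
      hgc.continuousOn (by fun_prop) hc]
  have step1 : cfc (fun s : ℝ => s / (l + Real.sqrt s)) a
      ≤ cfc (fun x : ℝ => (x + ε) / (l + Real.sqrt (x + ε))) a := by
    refine cfc_mono (fun x hx => ?_) hgc.continuousOn
      ((hgc.comp (continuous_id.add continuous_const)).continuousOn)
    exact my_g_mono hl (spectrum_nonneg_of_nonneg ha hx) (by linarith)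
  have step3 : cfc (fun x : ℝ => (x + ε) / (l + Real.sqrt (x + ε))) b
      ≤ cfc (fun x : ℝ => x / (l + Real.sqrt x) + ε / l) b := by
    refine cfc_mono (fun x hx => ?_)
      ((hgc.comp (continuous_id.add continuous_const)).continuousOn)
      ((hgc.add continuous_const).continuousOn)
    exact my_g_shift hl hε0 (spectrum_nonneg_of_nonneg hb hx)
  have e3 : cfc (fun x : ℝ => x / (l + Real.sqrt x) + ε / l) b
      = cfc (fun s : ℝ => s / (l + Real.sqrt s)) b + algebraMap ℝ 𝒜 (ε / l) :=
    cfc_add_const (R := ℝ) (ε / l) _ b hgc.continuousOn hbsa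
  have hεl : ε / l = δ := by
    rw [hεdef]; field_simp
  calc cfc (fun s : ℝ => s / (l + Real.sqrt s)) a
      ≤ cfc (fun x : ℝ => (x + ε) / (l + Real.sqrt (x + ε))) a := step1
    _ = cfc (fun s : ℝ => s / (l + Real.sqrt s)) (a + algebraMap ℝ 𝒜 ε) := (shift a hasa).symm
    _ ≤ cfc (fun s : ℝ => s / (l + Real.sqrt s)) (b + algebraMap ℝ 𝒜 ε) := hmid
    _ = cfc (fun x : ℝ => (x + ε) / (l + Real.sqrt (x + ε))) b := shift b hbsa
    _ ≤ cfc (fun x : ℝ => x / (l + Real.sqrt x) + ε / l) b := step3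
    _ = cfc (fun s : ℝ => s / (l + Real.sqrt s)) b + algebraMap ℝ 𝒜 (ε / l) := e3
    _ = cfc (fun s : ℝ => s / (l + Real.sqrt s)) b + algebraMap ℝ 𝒜 δ := by rw [hεl]

end Auxiliary

/-- If `A`, `B` are positive bounded operators on a complex Hilbert space
with `B² ≤ A²` and `λ > 0`, then `B²(λ+B)⁻¹ ≤ A²(λ+A)⁻¹`, where
`A²(λ+A)⁻¹ = cfc (t ↦ t²/(λ+t)) A`. -/
theorem sq_resolvent_monotone
    (H : Type) [NormedAddCommGroup H] [InnerProductSpace ℂ H] [CompleteSpace H]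
    (A B : H →L[ℂ] H) (hA : 0 ≤ A) (hB : 0 ≤ B) (h : B ^ 2 ≤ A ^ 2)
    (l : ℝ) (hl : 0 < l) :
    cfc (fun t : ℝ => t ^ 2 / (l + t)) B ≤ cfc (fun t : ℝ => t ^ 2 / (l + t)) A := by
  have hAsa : IsSelfAdjoint A := .of_nonneg hA
  have hBsa : IsSelfAdjoint B := .of_nonneg hB
  have hB2 : (0 : H →L[ℂ] H) ≤ B ^ 2 := by
    rw [pow_two]
    nth_rewrite 1 [← hBsa.star_eq]
    exact star_mul_self_nonneg B
  have hgc : Continuous (fun s : ℝ => s / (l + Real.sqrt s)) :=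
    continuous_id.div (continuous_const.add Real.continuous_sqrt)
      (fun x => by positivity)
  have key := my_main hl hB2 h
  have iden : ∀ (C : H →L[ℂ] H) (hC : 0 ≤ C),
      cfc (fun s : ℝ => s / (l + Real.sqrt s)) (C ^ 2)
        = cfc (fun t : ℝ => t ^ 2 / (l + t)) C := by
    intro C hC
    have hCsa : IsSelfAdjoint C := .of_nonneg hC
    calc cfc (fun s : ℝ => s / (l + Real.sqrt s)) (C ^ 2)
        = cfc (fun s : ℝ => s / (l + Real.sqrt s)) (cfc (fun t : ℝ => t ^ 2) C) := by
          rw [cfc_pow_id C 2 hCsa]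
      _ = cfc (fun t : ℝ => (t ^ 2) / (l + Real.sqrt (t ^ 2))) C :=
          (cfc_comp' (fun s : ℝ => s / (l + Real.sqrt s)) (fun t : ℝ => t ^ 2) C
            hgc.continuousOn (by fun_prop) hCsa).symm
      _ = cfc (fun t : ℝ => t ^ 2 / (l + t)) C := by
          refine cfc_congr fun x hx => ?_
          rw [Real.sqrt_sq (spectrum_nonneg_of_nonneg hC hx)]
  rwa [iden B hB, iden A hA] at key
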